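/- (Theorem 1, part 1: the optimal acceptance threshold.) Fix n ≥ 1, σ > 0, μ ∈ ℝ, ρ = μ/σ, p = Φ(ρ), q = Φ(−ρ), f = φ(ρ), ν = σ·f/√(q·p·n). Define g : ℝ → ℝ by g(α) = μ·Φ(τ(α)) + ν·φ(τ(α)), where τ(α) = (p − α)·√(n/(q·p)). Then α̂₀ := p·(1 − q·ρ/f) is the strict global maximizer of g: for every α ∈ ℝ with α ≠ α̂₀ one has g(α) < g(α̂₀). -/

import Mathlib

open MeasureTheory ProbabilityTheory

/-- The standard normal density φ(t) = (2π)^{-1/2} e^{-t²/2}. -/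
noncomputable def stdNormalPDF (t : ℝ) : ℝ :=
  (Real.sqrt (2 * Real.pi))⁻¹ * Real.exp (-t ^ 2 / 2)

/-- The standard normal distribution function Φ(x) = ∫_{-∞}^x φ(t) dt. -/
noncomputable def stdNormalCDF (x : ℝ) : ℝ :=
  ∫ t in Set.Iic x, stdNormalPDF t

lemma pdf_pos (t : ℝ) : 0 < stdNormalPDF t := by
  unfold stdNormalPDF
  have := Real.pi_pos
  positivity

lemma pdf_continuous : Continuous stdNormalPDF := by
  unfold stdNormalPDF
  fun_prop

lemma pdf_integrable : Integrable stdNormalPDF := by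
  have h : Integrable fun t : ℝ => Real.exp (-(1/2 : ℝ) * t ^ 2) :=
    integrable_exp_neg_mul_sq (by norm_num)
  have := h.const_mul (Real.sqrt (2 * Real.pi))⁻¹
  convert this using 2 with t
  unfold stdNormalPDF
  ring_nf

lemma pdf_hasDerivAt (t : ℝ) : HasDerivAt stdNormalPDF (-t * stdNormalPDF t) t := by
  have h1 : HasDerivAt (fun s : ℝ => -s ^ 2 / 2) (-t) t := by
    have := ((hasDerivAt_pow 2 t).neg).div_const 2
    simpa using this.congr_deriv (by ring)
  have h2 := (h1.exp).const_mul (Real.sqrt (2 * Real.pi))⁻¹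
  have : HasDerivAt stdNormalPDF ((Real.sqrt (2*Real.pi))⁻¹ * (Real.exp (-t^2/2) * (-t))) t := h2
  convert this using 1
  unfold stdNormalPDF; ring

lemma cdf_hasDerivAt (x : ℝ) : HasDerivAt stdNormalCDF (stdNormalPDF x) x := by
  have hint : ∀ y : ℝ, stdNormalCDF y = stdNormalCDF 0 + ∫ t in (0:ℝ)..y, stdNormalPDF t := by
    intro y
    have := intervalIntegral.integral_Iic_sub_Iic (pdf_integrable.integrableOn (s := Set.Iic 0)) (pdf_integrable.integrableOn (s := Set.Iic y))
    unfold stdNormalCDF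
    linarith [this]
  have hd : HasDerivAt (fun y => stdNormalCDF 0 + ∫ t in (0:ℝ)..y, stdNormalPDF t) (stdNormalPDF x) x := by
    exact (intervalIntegral.integral_hasDerivAt_right
      pdf_integrable.intervalIntegrable
      (pdf_continuous.stronglyMeasurableAtFilter _ _)
      pdf_continuous.continuousAt).const_add _
  exact hd.congr_of_eventuallyEq (Filter.Eventually.of_forall fun y => (hint y))

lemma cdf_pos (x : ℝ) : 0 < stdNormalCDF x := by
  unfold stdNormalCDF
  rw [setIntegral_pos_iff_support_of_nonneg_ae
    (Filter.Eventually.of_forall fun t => (pdf_pos t).le) pdf_integrable.integrableOn]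
  have : Function.support stdNormalPDF = Set.univ := by
    ext t; simp [Function.mem_support, (pdf_pos t).ne']
  rw [this, Set.univ_inter]
  simp [Real.volume_Iic]

lemma strict_max (m v : ℝ) (hv : 0 < v) (t : ℝ) (ht : t ≠ m / v) :
    m * stdNormalCDF t + v * stdNormalPDF t
      < m * stdNormalCDF (m / v) + v * stdNormalPDF (m / v) := by
  set h : ℝ → ℝ := fun s => m * stdNormalCDF s + v * stdNormalPDF s with hh
  have hd : ∀ s, HasDerivAt h (stdNormalPDF s * (m - v * s)) s := by
    intro s
    have := ((cdf_hasDerivAt s).const_mul m).add ((pdf_hasDerivAt s).const_mul v)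
    exact this.congr_deriv (by ring)
  have hderiv : ∀ s, deriv h s = stdNormalPDF s * (m - v * s) := fun s => (hd s).deriv
  have hcont : Continuous h := by
    have : Differentiable ℝ h := fun s => (hd s).differentiableAt
    exact this.continuous
  rcases lt_or_gt_of_ne ht with hlt | hgt
  · have hmono : StrictMonoOn h (Set.Icc t (m / v)) := by
      apply strictMonoOn_of_deriv_pos (convex_Icc _ _) hcont.continuousOn
      intro x hx
      rw [interior_Icc] at hx
      rw [hderiv]
      have : v * x < m := by
        have := hx.2
        calc v * x < v * (m / v) := by exact mul_lt_mul_of_pos_left this hv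
        _ = m := by field_simp
      exact mul_pos (pdf_pos x) (by linarith)
    exact hmono ⟨le_refl t, hlt.le⟩ ⟨hlt.le, le_refl _⟩ hlt
  · have hanti : StrictAntiOn h (Set.Icc (m / v) t) := by
      apply strictAntiOn_of_deriv_neg (convex_Icc _ _) hcont.continuousOn
      intro x hx
      rw [interior_Icc] at hx
      rw [hderiv]
      have : m < v * x := by
        have := hx.1
        calc m = v * (m / v) := by field_simp
        _ < v * x := by exact mul_lt_mul_of_pos_left this hv
      have := pdf_pos x
      nlinarith
    exact hanti ⟨le_refl _, hgt.le⟩ ⟨hgt.le, le_refl t⟩ hgt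


/-- Theorem 1, part 1: α̂₀ = p(1 − qρ/f) is the strict global maximizer of the
smoothed expected one-step capital increment. -/
theorem optimal_threshold_strict_global_max
    (n : ℕ) (hn : 1 ≤ n) (μ σ : ℝ) (hσ : 0 < σ)
    (ρ p q f ν α₀ : ℝ) (hρ : ρ = μ / σ) (hp : p = stdNormalCDF ρ) (hq : q = stdNormalCDF (-ρ))
    (hf : f = stdNormalPDF ρ) (hν : ν = σ * f / Real.sqrt (q * p * n))
    (hα₀ : α₀ = p * (1 - q * ρ / f))
    (τ g : ℝ → ℝ)
    (hτ : ∀ α, τ α = (p - α) * Real.sqrt (n / (q * p)))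
    (hg : ∀ α, g α = μ * stdNormalCDF (τ α) + ν * stdNormalPDF (τ α)) :
    ∀ α : ℝ, α ≠ α₀ → g α < g α₀ := by
  intro α hα
  have hn' : (0:ℝ) < n := by exact_mod_cast Nat.lt_of_lt_of_le Nat.zero_lt_one hn
  have hp0 : 0 < p := hp ▸ cdf_pos ρ
  have hq0 : 0 < q := hq ▸ cdf_pos (-ρ)
  have hf0 : 0 < f := hf ▸ pdf_pos ρ
  have hqp : 0 < q * p := mul_pos hq0 hp0
  have hc : 0 < Real.sqrt (n / (q * p)) := Real.sqrt_pos.mpr (div_pos hn' hqp)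
  have hs : 0 < Real.sqrt (q * p * n) := Real.sqrt_pos.mpr (by positivity)
  have hν0 : 0 < ν := by rw [hν]; positivity
  -- key sqrt identity
  have hsplit : Real.sqrt (n / (q * p)) = Real.sqrt n / Real.sqrt (q * p) :=
    Real.sqrt_div hn'.le _
  have hsplit2 : Real.sqrt (q * p * n) = Real.sqrt (q * p) * Real.sqrt n :=
    Real.sqrt_mul hqp.le _
  have hqpsq : Real.sqrt (q * p) * Real.sqrt (q * p) = q * p :=
    Real.mul_self_sqrt hqp.le
  have hqpne : Real.sqrt (q * p) ≠ 0 := by positivity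
  have key : q * p * Real.sqrt (n / (q * p)) = Real.sqrt (q * p * n) := by
    rw [hsplit, hsplit2, ← hqpsq]
    field_simp
    rw [Real.sqrt_sq (Real.sqrt_nonneg _)]
  have hτ0 : τ α₀ = μ / ν := by
    rw [hτ, hα₀, hν, hρ]
    have hfne : f ≠ 0 := hf0.ne'
    have hσne : σ ≠ 0 := hσ.ne'
    have hq2 : Real.sqrt q * Real.sqrt q = q := Real.mul_self_sqrt hq0.le
    have hp2 : Real.sqrt p * Real.sqrt p = p := Real.mul_self_sqrt hp0.le
    rw [mul_comm q p] at key
    field_simp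
    linear_combination μ * key
  have hne : τ α ≠ μ / ν := by
    rw [← hτ0, hτ, hτ α₀]
    intro h
    exact hα (by
      have := mul_right_cancel₀ (ne_of_gt hc) h
      linarith)
  have := strict_max μ ν hν0 (τ α) hne
  rw [hg α, hg α₀, hτ0]
  exact this
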